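/- arXiv:1511.00601 — 4 statements merged into one kernel-verified Lean document; each statement's English description precedes it below -/
import Mathlib

section
/- Let H ∈ ℤ[x] be a non-constant square-free polynomial and let 0 < δ < 1/11. Then the number of positive integers n ≤ x for which there exists a prime p with x^δ < p ≤ x^{1−δ} and p² ∣ H(n) is O(x^{1−δ}). -/
open Polynomial


lemma bezout_aux (κ : ℕ) (H : Polynomial ℤ) (P : Fin κ → Polynomial ℤ)
    (hH : H = ∏ i, P i) (hnc : 0 < H.natDegree)
    (hirr : ∀ i, Irreducible (P i))
    (hprop : ∀ i j, i ≠ j → ¬ Associated (P i) (P j)) :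
    ∃ (A B : Polynomial ℤ) (N : ℤ), N ≠ 0 ∧
      A * H + B * derivative H = C N := by
  classical
  set φ := Int.castRingHom ℚ with hφ
  have hφinj : Function.Injective φ := Int.cast_injective
  set Q : Fin κ → Polynomial ℚ := fun i => (P i).map φ with hQ
  -- each Q i is a unit or irreducible (with P i primitive)
  have hkey : ∀ i, IsUnit (Q i) ∨ ((P i).IsPrimitive ∧ Irreducible (Q i)) := by
    intro i
    rcases Nat.eq_zero_or_pos (P i).natDegree with h0 | hpos
    · left
      have hPC : P i = C ((P i).coeff 0) := (eq_C_of_natDegree_eq_zero h0)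
      have hc0 : (P i).coeff 0 ≠ 0 := by
        intro h; apply (hirr i).ne_zero; rw [hPC, h, map_zero]
      have : Q i = C (((P i).coeff 0 : ℚ)) := by
        rw [hQ]; simp only; rw [hPC]; simp
      rw [this]
      exact isUnit_C.mpr (isUnit_iff_ne_zero.mpr (by exact_mod_cast hc0))
    · right
      have hprim : (P i).IsPrimitive := by
        intro r hr
        obtain ⟨q, hq⟩ := hr
        rcases (hirr i).isUnit_or_isUnit hq with h | h
        · exact isUnit_C.mp h
        · exfalso
          obtain ⟨u, hu, huq⟩ := Polynomial.isUnit_iff.mp h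
          rw [hq, ← huq] at hpos
          have h1 : (C r * C u).natDegree ≤ 0 := le_trans natDegree_mul_le (by simp)
          omega
      exact ⟨hprim, (IsPrimitive.Int.irreducible_iff_irreducible_map_cast hprim).mp (hirr i)⟩
  -- pairwise: Q i does not divide Q j for i ≠ j when both irreducible
  have hnd : ∀ i j, i ≠ j → Irreducible (Q i) → Irreducible (Q j) → ¬ (Q i ∣ Q j) := by
    intro i j hij hQi hQj hdvd
    have hassocQ : Associated (Q i) (Q j) := hQi.associated_of_dvd hQj hdvd
    have hprimi : (P i).IsPrimitive := by
      rcases hkey i with h | h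
      · exact absurd h hQi.not_isUnit
      · exact h.1
    have hprimj : (P j).IsPrimitive := by
      rcases hkey j with h | h
      · exact absurd h hQj.not_isUnit
      · exact h.1
    have h1 : P i ∣ P j :=
      (IsPrimitive.Int.dvd_iff_map_cast_dvd_map_cast _ _ hprimi).mpr hassocQ.dvd
    have h2 : P j ∣ P i :=
      (IsPrimitive.Int.dvd_iff_map_cast_dvd_map_cast _ _ hprimj).mpr hassocQ.symm.dvd
    exact hprop i j hij (associated_of_dvd_dvd h1 h2)
  -- squarefreeness of the product
  have hsf : ∀ s : Finset (Fin κ), Squarefree (∏ i ∈ s, Q i) := by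
    intro s
    induction s using Finset.induction_on with
    | empty => simpa using squarefree_one
    | insert _ _ hna ih =>
      rename_i a s
      rw [Finset.prod_insert hna]
      refine squarefree_mul_iff.mpr ⟨?_, ?_, ih⟩
      · rcases hkey a with h | h
        · exact h.isRelPrime_left
        · refine h.2.isRelPrime_iff_not_dvd.mpr ?_
          intro hdvd
          have hpr : Prime (Q a) := h.2.prime
          obtain ⟨j, hjs, hjd⟩ := hpr.exists_mem_finset_dvd hdvd
          rcases hkey j with hu | hj
          · exact hpr.not_unit (isUnit_of_dvd_unit hjd hu)
          · exact hnd a j (by rintro rfl; exact hna hjs) h.2 hj.2 hjd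
      · rcases hkey a with h | h
        · exact h.squarefree
        · exact h.2.squarefree
  have hHq : Squarefree (H.map φ) := by
    rw [hH, Polynomial.map_prod]
    exact hsf Finset.univ
  have hsep : (H.map φ).Separable := (PerfectField.separable_iff_squarefree).mpr hHq
  obtain ⟨a, b, hab⟩ := hsep
  rw [derivative_map] at hab
  -- clear denominators
  obtain ⟨⟨c, hc0⟩, hc⟩ := IsLocalization.integerNormalization_map_to_map (nonZeroDivisors ℤ) a
  obtain ⟨⟨d, hd0⟩, hd⟩ := IsLocalization.integerNormalization_map_to_map (nonZeroDivisors ℤ) b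
  refine ⟨C d * IsLocalization.integerNormalization (nonZeroDivisors ℤ) a,
          C c * IsLocalization.integerNormalization (nonZeroDivisors ℤ) b,
          c * d, mul_ne_zero (nonZeroDivisors.ne_zero hc0) (nonZeroDivisors.ne_zero hd0), ?_⟩
  apply Polynomial.map_injective φ hφinj
  have halg : algebraMap ℤ ℚ = φ := by ext n; simp [hφ]
  rw [halg] at hc hd
  simp only [Polynomial.map_add, Polynomial.map_mul, Polynomial.map_C, hc, hd,
    zsmul_eq_mul]
  have hcq : ∀ n : ℤ, φ n = (n : ℚ) := fun n => rfl
  simp only [hcq, C_eq_intCast]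
  push_cast
  linear_combination ((c : ℚ[X]) * (d : ℚ[X])) * hab


lemma roots_mod_sq_card (H A B : Polynomial ℤ) (N : ℤ)
    (hab : A * H + B * derivative H = C N)
    (p m : ℕ) [NeZero m]
    [DecidablePred fun z : ZMod m => (H.map (Int.castRingHom (ZMod m))).eval z = 0]
    (hm : m = p ^ 2) (hp : p.Prime) (hpN : ¬ (p : ℤ) ∣ N) :
    (Finset.univ.filter fun z : ZMod m =>
        (H.map (Int.castRingHom (ZMod m))).eval z = 0).card ≤ H.natDegree := by
  classical
  subst hm
  haveI : Fact p.Prime := ⟨hp⟩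
  set φ2 := Int.castRingHom (ZMod (p ^ 2)) with hφ2
  set φ1 := Int.castRingHom (ZMod p) with hφ1
  set f2 := H.map φ2 with hf2
  set f1 := H.map φ1 with hf1
  set g2 := (derivative H).map φ2 with hg2
  have hp2 : p ∣ p ^ 2 := dvd_pow_self p two_ne_zero
  set π : ZMod (p ^ 2) →+* ZMod p := ZMod.castHom hp2 (ZMod p) with hπ
  have hmapf : f2.map π = f1 := by
    rw [hf2, hf1, Polynomial.map_map]; congr 1; exact Subsingleton.elim _ _
  -- N is a unit mod p^2
  have hcop : IsCoprime ((p : ℤ) ^ 2) N := by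
    refine IsCoprime.pow_left ?_
    exact (Nat.prime_iff_prime_int.mp hp).irreducible.coprime_iff_not_dvd.mpr hpN
  have hNunit' : IsUnit ((N : ZMod (p ^ 2))) := by
    obtain ⟨u, v, huv⟩ := hcop
    have : ((u * (p:ℤ)^2 + v * N : ℤ) : ZMod (p^2)) = ((1 : ℤ) : ZMod (p^2)) := by
      rw [huv]
    push_cast at this
    have hpz : ((p : ZMod (p^2)))^2 = 0 := by
      have := ZMod.natCast_self (p^2)
      push_cast at this
      exact this
    rw [hpz, mul_zero, zero_add] at this
    exact IsUnit.of_mul_eq_one _ (by rw [mul_comm]; exact this)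
  -- derivative is a unit at every root of f2
  have hunit : ∀ z : ZMod (p ^ 2), f2.eval z = 0 → IsUnit (g2.eval z) := by
    intro z hz
    have hmap : (A.map φ2) * f2 + (B.map φ2) * g2 = C ((N : ZMod (p^2))) := by
      have := congrArg (Polynomial.map φ2) hab
      simpa [Polynomial.map_add, Polynomial.map_mul, Polynomial.map_C] using this
    have hev := congrArg (Polynomial.eval z) hmap
    simp [hz] at hev
    exact isUnit_of_mul_isUnit_right (by rw [hev]; exact hNunit')
  -- f1 ≠ 0
  have hf1ne : f1 ≠ 0 := by
    intro h0
    have hmap : (A.map φ1) * f1 + (B.map φ1) * ((derivative H).map φ1) = C ((N : ZMod p)) := by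
      have := congrArg (Polynomial.map φ1) hab
      simpa [Polynomial.map_add, Polynomial.map_mul, Polynomial.map_C] using this
    have hder : (derivative H).map φ1 = derivative f1 := (derivative_map H φ1).symm
    rw [h0, hder, h0] at hmap
    simp at hmap
    have : ((N : ℤ) : ZMod p) = 0 := by
      have := congrArg (fun q => Polynomial.coeff q 0) hmap
      simpa using this.symm
    rw [ZMod.intCast_zmod_eq_zero_iff_dvd] at this
    exact hpN (by exact_mod_cast this)
  -- injection into roots of f1
  refine le_trans (Finset.card_le_card_of_injOn (fun z => π z)
    ?_ ?_) (le_trans f1.roots.toFinset_card_le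
      (le_trans (f1.card_roots' ) natDegree_map_le))
  · intro z hz
    simp only [Finset.mem_coe, Finset.mem_filter, Finset.mem_univ, true_and] at hz ⊢
    rw [Multiset.mem_toFinset, mem_roots hf1ne]
    show f1.eval (π z) = 0
    rw [← hmapf, Polynomial.eval_map, Polynomial.eval₂_at_apply, hz, map_zero]
  · intro z₁ hz₁ z₂ hz₂ hzz
    simp only [Finset.mem_coe, Finset.mem_filter, Finset.mem_univ, true_and] at hz₁ hz₂
    set y := z₂ - z₁ with hy
    have hzz' : π z₁ = π z₂ := hzz
    have hπy : π y = 0 := by rw [hy, map_sub, ← hzz', sub_self]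
    have hysq : y ^ 2 = 0 := by
      have hval : ((y.val : ℕ) : ZMod p) = 0 := by
        rw [ZMod.natCast_val, ← ZMod.castHom_apply (h := hp2)]
        exact hπy
      obtain ⟨t, ht⟩ := (ZMod.natCast_eq_zero_iff _ p).mp hval
      have hyv : ((y.val : ℕ) : ZMod (p ^ 2)) = y := ZMod.natCast_rightInverse y
      have : y = ((p * t : ℕ) : ZMod (p ^ 2)) := by rw [← ht, hyv]
      rw [this]
      have hz0 : ((p : ZMod (p ^ 2))) ^ 2 = 0 := by
        have h := ZMod.natCast_self (p ^ 2); push_cast at h; exact h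
      push_cast
      calc ((p : ZMod (p ^ 2)) * (t : ZMod (p ^ 2))) ^ 2
          = (p : ZMod (p ^ 2)) ^ 2 * (t : ZMod (p ^ 2)) ^ 2 := by ring
        _ = 0 := by rw [hz0, zero_mul]
    obtain ⟨k, hk⟩ := f2.binomExpansion z₁ y
    rw [show z₁ + y = z₂ by rw [hy]; ring] at hk
    rw [hz₁, hz₂, derivative_map] at hk
    have : g2.eval z₁ * y = 0 := by
      rw [hysq, mul_zero, add_zero, zero_add] at hk
      exact hk.symm
    have hy0 : y = 0 := by
      obtain ⟨u, hu⟩ := hunit z₁ hz₁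
      calc y = ((u⁻¹ : (ZMod (p^2))ˣ) : ZMod (p^2)) * (g2.eval z₁ * y) := by
              rw [← mul_assoc, ← hu]; simp
        _ = 0 := by rw [this, mul_zero]
    rw [hy, sub_eq_zero] at hy0
    exact hy0.symm


lemma sum_inv_sq_Ioc (a : ℕ) (ha : 1 ≤ a) (b : ℕ) :
    ∑ m ∈ Finset.Ioc a b, (1 : ℝ) / (m : ℝ) ^ 2 ≤ 1 / a := by
  have ha0 : (0:ℝ) < a := by exact_mod_cast ha
  rcases le_or_gt a b with hab | hab
  · have aux : ∀ c : ℕ, a ≤ c →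
        ∑ m ∈ Finset.Ioc a c, (1 : ℝ) / (m : ℝ) ^ 2 ≤ 1 / a - 1 / c := by
      intro c hc
      induction c, hc using Nat.le_induction with
      | base => simp
      | succ c hc ih =>
        rw [Finset.sum_Ioc_succ_top (by omega)]
        have hc0 : (0:ℝ) < c := lt_of_lt_of_le ha0 (by exact_mod_cast hc)
        have hstep : (1:ℝ) / ((c:ℝ)+1)^2 ≤ 1/(c:ℝ) - 1/((c:ℝ)+1) := by
          rw [div_sub_div _ _ (ne_of_gt hc0) (by positivity),
            div_le_div_iff₀ (by positivity) (by positivity)]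
          ring_nf
          nlinarith [sq_nonneg ((c:ℝ))]
        have : ((c+1 : ℕ) : ℝ) = (c:ℝ) + 1 := by push_cast; ring
        rw [this]
        linarith [ih]
    have := aux b hab
    have hb0 : (0:ℝ) < b := lt_of_lt_of_le ha0 (by exact_mod_cast hab)
    have : (1:ℝ)/b ≥ 0 := by positivity
    linarith [aux b hab]
  · rw [Finset.Ioc_eq_empty (by omega)]
    simp


lemma count_fiber (H : Polynomial ℤ) (m M : ℕ) [NeZero m]
    [DecidablePred fun n : ℕ => (m : ℤ) ∣ H.eval (n : ℤ)]
    [DecidablePred fun z : ZMod m => (H.map (Int.castRingHom (ZMod m))).eval z = 0] :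
    ((Finset.Icc 1 M).filter fun n : ℕ => (m : ℤ) ∣ H.eval (n : ℤ)).card ≤
      (Finset.univ.filter fun z : ZMod m =>
        (H.map (Int.castRingHom (ZMod m))).eval z = 0).card * (M / m + 1) := by
  classical
  rw [show M / m + 1 = (Finset.range (M / m + 1)).card from (Finset.card_range _).symm,
    ← Finset.card_product]
  apply Finset.card_le_card_of_injOn
    (fun n => (((n : ℕ) : ZMod m), n / m))
  · intro n hn
    simp only [Finset.mem_coe, Finset.mem_filter, Finset.mem_Icc] at hn ⊢
    obtain ⟨⟨hn1, hnM⟩, hdvd⟩ := hn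
    rw [Finset.mem_product]
    constructor
    · simp only [Finset.mem_filter, Finset.mem_univ, true_and]
      have hcast : ((n : ℕ) : ZMod m) = (Int.castRingHom (ZMod m)) ((n : ℤ)) := by
        simp
      rw [hcast, Polynomial.eval_map, Polynomial.eval₂_at_apply]
      have : ((H.eval (n:ℤ) : ℤ) : ZMod m) = 0 :=
        (ZMod.intCast_zmod_eq_zero_iff_dvd _ m).mpr (by exact_mod_cast hdvd)
      exact this
    · simp only [Finset.mem_range]
      exact Nat.lt_succ_of_le (Nat.div_le_div_right hnM)
  · intro n₁ h₁ n₂ h₂ h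
    simp only [Prod.mk.injEq] at h
    obtain ⟨hmod, hdiv⟩ := h
    have hval : n₁ % m = n₂ % m := by
      have := congrArg ZMod.val hmod
      rwa [ZMod.val_natCast, ZMod.val_natCast] at this
    have e1 := Nat.div_add_mod n₁ m
    have e2 := Nat.div_add_mod n₂ m
    rw [hdiv, hval] at e1
    omega


/-- Let `H ∈ ℤ[x]` be a non-constant square-free polynomial and `0 < δ < 1/11`.
Then the number of positive integers `n ≤ x` for which some prime
`p ∈ (x^δ, x^{1−δ}]` satisfies `p² ∣ H(n)` is `O(x^{1−δ})`. -/
theorem sigma21_bound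
    (κ : ℕ) (hκ : 0 < κ) (H : Polynomial ℤ) (P : Fin κ → Polynomial ℤ)
    (hH : H = ∏ i, P i) (hnc : 0 < H.natDegree)
    (hirr : ∀ i, Irreducible (P i))
    (hprop : ∀ i j, i ≠ j → ¬ Associated (P i) (P j))
    (δ : ℝ) (hδ0 : 0 < δ) (hδ : δ < 1 / 11) :
    ∃ C : ℝ, ∃ x₀ : ℝ, ∀ x : ℝ, x₀ ≤ x →
      (({n : ℕ | 1 ≤ n ∧ (n : ℝ) ≤ x ∧ ∃ p : ℕ, p.Prime ∧
          x ^ δ < (p : ℝ) ∧ (p : ℝ) ≤ x ^ (1 - δ) ∧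
          (p : ℤ) ^ 2 ∣ H.eval (n : ℤ)}.ncard : ℝ)) ≤ C * x ^ (1 - δ) := by
  classical
  obtain ⟨A, B, N, hN0, hab⟩ := bezout_aux κ H P hH hnc hirr hprop
  set d := H.natDegree with hd
  set c₀ : ℝ := 2 + N.natAbs with hc₀
  have hc₀2 : (2:ℝ) ≤ c₀ := le_add_of_nonneg_right (by positivity)
  refine ⟨3 * d, max 1 (c₀ ^ (1/δ)), ?_⟩
  intro x hx
  have hx1 : (1:ℝ) ≤ x := le_trans (le_max_left _ _) hx
  have hxpos : (0:ℝ) < x := lt_of_lt_of_le zero_lt_one hx1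
  have hc₀pos : (0:ℝ) < c₀ := by positivity
  have hxd : c₀ ≤ x ^ δ := by
    have h1 : c₀ ^ (1/δ) ≤ x := le_trans (le_max_right _ _) hx
    have h2 : (c₀ ^ (1/δ)) ^ δ ≤ x ^ δ :=
      Real.rpow_le_rpow (by positivity) h1 hδ0.le
    rwa [← Real.rpow_mul hc₀pos.le, one_div,
      inv_mul_cancel₀ hδ0.ne', Real.rpow_one] at h2
  -- basic quantities
  set a := Nat.floor (x ^ δ) with haa
  set b := Nat.floor (x ^ (1 - δ)) with hbb
  set M := Nat.floor x with hM
  have hxd2 : (2:ℝ) ≤ x ^ δ := le_trans hc₀2 hxd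
  have ha1 : 1 ≤ a := Nat.le_floor (by exact_mod_cast le_trans (by norm_num) hxd2)
  have ha0 : (0:ℝ) < a := by exact_mod_cast ha1
  have haN : N.natAbs ≤ a := Nat.le_floor (le_trans (by rw [hc₀]; norm_num) hxd)
  have hahalf : x ^ δ / 2 ≤ (a:ℝ) := by
    have h1 : x ^ δ - 1 < (a:ℝ) := Nat.sub_one_lt_floor _
    linarith
  -- the finsets
  set Np : ℕ → Finset ℕ := fun p =>
    (Finset.Icc 1 M).filter (fun n : ℕ => ((p ^ 2 : ℕ) : ℤ) ∣ H.eval (n : ℤ)) with hNp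
  set Pr : Finset ℕ := (Finset.Ioc a b).filter (fun p => p.Prime) with hPr
  set F : Finset ℕ := (Finset.Icc 1 M).filter
    (fun n : ℕ => ∃ p : ℕ, p.Prime ∧ x ^ δ < (p:ℝ) ∧ (p:ℝ) ≤ x ^ (1-δ) ∧
      (p : ℤ) ^ 2 ∣ H.eval (n : ℤ)) with hF
  -- step 1 : ncard ≤ F.card
  have step1 : ({n : ℕ | 1 ≤ n ∧ (n : ℝ) ≤ x ∧ ∃ p : ℕ, p.Prime ∧
      x ^ δ < (p : ℝ) ∧ (p : ℝ) ≤ x ^ (1 - δ) ∧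
      (p : ℤ) ^ 2 ∣ H.eval (n : ℤ)}.ncard : ℝ) ≤ (F.card : ℝ) := by
    have hsub : {n : ℕ | 1 ≤ n ∧ (n : ℝ) ≤ x ∧ ∃ p : ℕ, p.Prime ∧
        x ^ δ < (p : ℝ) ∧ (p : ℝ) ≤ x ^ (1 - δ) ∧
        (p : ℤ) ^ 2 ∣ H.eval (n : ℤ)} ⊆ ↑F := by
      intro n hn
      obtain ⟨h1, h2, hp⟩ := hn
      simp only [hF, Finset.coe_filter, Set.mem_setOf_eq, Finset.mem_Icc]
      exact ⟨⟨h1, Nat.le_floor h2⟩, hp⟩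
    have := Set.ncard_le_ncard hsub F.finite_toSet
    rw [Set.ncard_coe_finset] at this
    exact_mod_cast this
  -- step 2 : F ⊆ biUnion
  have step2 : F ⊆ Pr.biUnion Np := by
    intro n hn
    simp only [hF, Finset.mem_filter, Finset.mem_Icc] at hn
    obtain ⟨⟨hn1, hnM⟩, p, hp, hpl, hpu, hpd⟩ := hn
    rw [Finset.mem_biUnion]
    refine ⟨p, ?_, ?_⟩
    · simp only [hPr, Finset.mem_filter, Finset.mem_Ioc]
      refine ⟨⟨?_, Nat.le_floor hpu⟩, hp⟩
      have : (a:ℝ) < p := lt_of_le_of_lt (Nat.floor_le (by positivity)) hpl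
      exact_mod_cast this
    · simp only [hNp, Finset.mem_filter, Finset.mem_Icc]
      exact ⟨⟨hn1, hnM⟩, by push_cast; exact hpd⟩
  -- step 3 : per-prime bound
  have step3 : ∀ p ∈ Pr, ((Np p).card : ℝ) ≤ (d:ℝ) * (x / (p:ℝ)^2 + 1) := by
    intro p hpPr
    simp only [hPr, Finset.mem_filter, Finset.mem_Ioc] at hpPr
    obtain ⟨⟨hpa, hpb⟩, hp⟩ := hpPr
    haveI : NeZero (p ^ 2) := ⟨pow_ne_zero 2 hp.ne_zero⟩
    have hpN : ¬ (p : ℤ) ∣ N := by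
      intro hdvd
      have h6 : p ∣ N.natAbs := by
        have := Int.natAbs_dvd_natAbs.mpr hdvd
        simpa using this
      have := Nat.le_of_dvd (Int.natAbs_pos.mpr hN0) h6
      omega
    have hc1 := count_fiber H (p^2) M
    have hc2 := roots_mod_sq_card H A B N hab p (p^2) rfl hp hpN
    have h1 : (Np p).card ≤ d * (M / p ^ 2 + 1) :=
      le_trans hc1 (Nat.mul_le_mul_right _ hc2)
    have h2 : ((M / p ^ 2 : ℕ) : ℝ) + 1 ≤ x / (p:ℝ)^2 + 1 := by
      have h3 : ((M / p ^ 2 : ℕ) : ℝ) ≤ (M : ℝ) / ((p^2 : ℕ) : ℝ) := Nat.cast_div_le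
      have h4 : (M:ℝ) ≤ x := Nat.floor_le hxpos.le
      have hp0 : (0:ℝ) < (p:ℝ)^2 := by
        have : 0 < p := hp.pos
        positivity
      have h5 : (M:ℝ) / (p:ℝ)^2 ≤ x / (p:ℝ)^2 := by gcongr
      push_cast at h3
      linarith
    calc ((Np p).card : ℝ) ≤ (d : ℝ) * (((M / p ^ 2 : ℕ) : ℝ) + 1) := by
          exact_mod_cast h1
      _ ≤ (d:ℝ) * (x / (p:ℝ)^2 + 1) := by
          apply mul_le_mul_of_nonneg_left h2 (by positivity)
  -- step 4 : assemble the sum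
  have step4 : (F.card : ℝ) ≤ ∑ p ∈ Pr, ((d:ℝ) * (x / (p:ℝ)^2 + 1)) := by
    have h1 : F.card ≤ ∑ p ∈ Pr, (Np p).card :=
      le_trans (Finset.card_le_card step2) (Finset.card_biUnion_le)
    calc (F.card : ℝ) ≤ ∑ p ∈ Pr, ((Np p).card : ℝ) := by exact_mod_cast h1
      _ ≤ ∑ p ∈ Pr, ((d:ℝ) * (x / (p:ℝ)^2 + 1)) := Finset.sum_le_sum step3
  have hsum : ∑ p ∈ Pr, (1:ℝ) / (p:ℝ)^2 ≤ 1 / (a:ℝ) := by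
    refine le_trans (Finset.sum_le_sum_of_subset_of_nonneg
      (Finset.filter_subset _ _) ?_) (sum_inv_sq_Ioc a ha1 b)
    intro m hm _
    positivity
  have hPrcard : (Pr.card : ℝ) ≤ x ^ (1 - δ) := by
    have h1 : Pr.card ≤ b := by
      have hsub : Pr ⊆ Finset.Ioc a b := Finset.filter_subset _ _
      have h := Finset.card_le_card hsub
      rw [Nat.card_Ioc] at h
      omega
    have h2 : (b : ℝ) ≤ x ^ (1 - δ) := Nat.floor_le (by positivity)
    calc (Pr.card : ℝ) ≤ (b:ℝ) := by exact_mod_cast h1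
      _ ≤ x ^ (1-δ) := h2
  have hxa : x * (1 / (a:ℝ)) ≤ 2 * x ^ (1 - δ) := by
    have h0 : (0:ℝ) < x ^ δ / 2 := by positivity
    have h1 : 1 / (a:ℝ) ≤ 1 / (x ^ δ / 2) := by
      apply one_div_le_one_div_of_le h0 hahalf
    have h2 : (1:ℝ) / (x ^ δ / 2) = 2 / x ^ δ := one_div_div _ _
    have h3 : x / x ^ δ = x ^ (1 - δ) := by
      rw [Real.rpow_sub hxpos, Real.rpow_one]
    calc x * (1 / (a:ℝ)) ≤ x * (2 / x ^ δ) := by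
          apply mul_le_mul_of_nonneg_left (h2 ▸ h1) hxpos.le
      _ = 2 * (x / x ^ δ) := by ring
      _ = 2 * x ^ (1-δ) := by rw [h3]
  -- expand the sum
  have hexp : ∑ p ∈ Pr, ((d:ℝ) * (x / (p:ℝ)^2 + 1))
      = (d:ℝ) * (x * (∑ p ∈ Pr, (1:ℝ)/(p:ℝ)^2) + Pr.card) := by
    rw [← Finset.mul_sum, Finset.sum_add_distrib, Finset.sum_const, Finset.mul_sum]
    congr 2
    · refine Finset.sum_congr rfl fun p _ => ?_
      rw [mul_one_div]
    · simp
  -- conclude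
  have hfinal : (F.card : ℝ) ≤ 3 * (d:ℝ) * x ^ (1-δ) := by
    have hd0 : (0:ℝ) ≤ (d:ℝ) := by positivity
    have hx0 : (0:ℝ) ≤ x := hxpos.le
    have h1 : x * (∑ p ∈ Pr, (1:ℝ)/(p:ℝ)^2) ≤ x * (1/(a:ℝ)) :=
      mul_le_mul_of_nonneg_left hsum hx0
    have h2 : x * (∑ p ∈ Pr, (1:ℝ)/(p:ℝ)^2) + Pr.card ≤ 2 * x ^ (1-δ) + x ^ (1-δ) := by
      linarith
    calc (F.card : ℝ) ≤ ∑ p ∈ Pr, ((d:ℝ) * (x / (p:ℝ)^2 + 1)) := step4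
      _ = (d:ℝ) * (x * (∑ p ∈ Pr, (1:ℝ)/(p:ℝ)^2) + Pr.card) := hexp
      _ ≤ (d:ℝ) * (2 * x ^ (1-δ) + x ^ (1-δ)) := mul_le_mul_of_nonneg_left h2 hd0
      _ = 3 * (d:ℝ) * x ^ (1-δ) := by ring
  calc _ ≤ (F.card : ℝ) := step1
    _ ≤ 3 * (d:ℝ) * x ^ (1-δ) := hfinal
    _ = 3 * (d:ℝ) * x ^ (1-δ) := rfl
end

section
/- For every integer k ≥ 1 and every real x > 0 one has (−1)^{k−1} Ein^{(k)}(x)/k! = (1/k) e^{−x} ∑_{n=0}^∞ x^n/(n+k)!; consequently 0 ≤ (−1)^{k−1} Ein^{(k)}(x)/k! ≤ 1/(k·k!), and moreover |Ein^{(k+1)}(x)|/(k+1)! ≤ |Ein^{(k)}(x)|/k!, i.e. for each fixed x > 0 the sequence Ein^{(k)}(x)/k! is alternating in sign and decreasing in absolute value. -/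
/-- `Ein(x) = ∫_0^x (1 − e^{−t})/t dt`, with the integrand extended continuously by the
value `1` at `t = 0`. -/
noncomputable def Ein (x : ℝ) : ℝ :=
  ∫ t in (0:ℝ)..x, if t = 0 then 1 else (1 - Real.exp (-t)) / t

noncomputable def EP (k : ℕ) (x : ℝ) : ℝ := ∑ j ∈ Finset.range k, x ^ j / j.factorial

lemma hasDerivAt_EP (k : ℕ) (x : ℝ) : HasDerivAt (EP (k+1)) (EP k x) x := by
  induction k with
  | zero =>
    have : EP 1 = fun _ : ℝ => (1:ℝ) := by funext y; simp [EP]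
    rw [this]
    simpa [EP] using (hasDerivAt_const x (1:ℝ))
  | succ m ih =>
    have h2 : HasDerivAt (fun y : ℝ => y ^ (m+1) / (m+1).factorial)
        (x ^ m / m.factorial) x := by
      have : HasDerivAt (fun y : ℝ => y ^ (m+1) / ((m+1).factorial : ℝ)) _ x := (hasDerivAt_pow (m+1) x).div_const ((m+1).factorial : ℝ)
      convert this using 1
      push_cast [Nat.factorial_succ]
      field_simp
    have : HasDerivAt (fun y : ℝ => EP (m+1) y + y ^ (m+1) / (m+1).factorial) _ x := ih.add h2
    have heq : (fun y : ℝ => EP (m+1) y + y ^ (m+1) / (m+1).factorial) = EP (m+2) := by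
      funext y; simp [EP, Finset.sum_range_succ]
    rw [heq] at this
    convert this using 1
    simp [EP, Finset.sum_range_succ]

noncomputable def EF (k : ℕ) (x : ℝ) : ℝ := (1 - Real.exp (-x) * EP k x) / x ^ k

lemma EP_succ (k : ℕ) (x : ℝ) : EP (k+1) x = EP k x + x ^ k / k.factorial := by
  simp [EP, Finset.sum_range_succ]

lemma hasDerivAt_EF (m : ℕ) (x : ℝ) (hx : x ≠ 0) :
    HasDerivAt (EF (m+1)) (-((m:ℝ)+1) * EF (m+2) x) x := by
  have he : HasDerivAt (fun y : ℝ => Real.exp (-y)) (-Real.exp (-x)) x := by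
    simpa using (hasDerivAt_neg x).exp
  have hN : HasDerivAt (fun y : ℝ => 1 - Real.exp (-y) * EP (m+1) y)
      (Real.exp (-x) * EP (m+1) x - Real.exp (-x) * EP m x) x := by
    have : HasDerivAt (fun y : ℝ => 1 - Real.exp (-y) * EP (m+1) y) _ x := (hasDerivAt_const x (1:ℝ)).sub (he.mul (hasDerivAt_EP m x))
    convert this using 1; ring
  have hD : HasDerivAt (fun y : ℝ => y ^ (m+1)) (((m:ℝ)+1) * x ^ m) x := by
    simpa using hasDerivAt_pow (m+1) x
  have h : HasDerivAt (fun y => (1 - Real.exp (-y) * EP (m+1) y) / y ^ (m+1)) _ x := hN.div hD (pow_ne_zero _ hx)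
  have heq : EF (m+1) = fun y => (1 - Real.exp (-y) * EP (m+1) y) / y ^ (m+1) := rfl
  rw [heq]
  convert h using 1
  rw [EF, EP_succ, EP_succ]
  have hf : ((m+1).factorial : ℝ) = (m+1) * m.factorial := by
    push_cast [Nat.factorial_succ]; ring
  rw [hf]
  have h1 : (m.factorial : ℝ) ≠ 0 := Nat.cast_ne_zero.2 m.factorial_ne_zero
  field_simp
  ring

noncomputable def einF (t : ℝ) : ℝ := if t = 0 then 1 else (1 - Real.exp (-t)) / t

lemma einF_continuous : Continuous einF := by
  rw [continuous_iff_continuousAt]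
  intro t
  rcases eq_or_ne t 0 with rfl | ht
  · rw [← continuousWithinAt_compl_self]
    have hg : HasDerivAt (fun y : ℝ => -Real.exp (-y)) 1 0 := by
      exact (((hasDerivAt_neg (0:ℝ)).exp).neg).congr_deriv (by simp)
    have h1 : Filter.Tendsto (slope (fun y : ℝ => -Real.exp (-y)) 0) (nhdsWithin 0 {(0:ℝ)}ᶜ)
        (nhds 1) := hasDerivAt_iff_tendsto_slope.mp hg
    have : einF 0 = 1 := by simp [einF]
    rw [ContinuousWithinAt, this]
    refine h1.congr' ?_
    filter_upwards [self_mem_nhdsWithin] with s hs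
    have hs' : s ≠ 0 := hs
    simp [slope, einF, hs', div_eq_inv_mul, sub_eq_add_neg]
    ring
  · have : ContinuousAt (fun s : ℝ => (1 - Real.exp (-s)) / s) t := by
      exact ((continuous_const.sub (Real.continuous_exp.comp continuous_neg)).continuousAt).div
        continuousAt_id ht
    refine this.congr ?_
    filter_upwards [isOpen_ne.mem_nhds ht] with s hs
    simp [einF, hs]

lemma hasDerivAt_Ein (x : ℝ) : HasDerivAt Ein (einF x) x := by
  have := (einF_continuous.integral_hasStrictDerivAt 0 x).hasDerivAt
  exact this

lemma Ein_iteratedDeriv_eq : ∀ m : ℕ, ∀ x : ℝ, 0 < x →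
    iteratedDeriv (m+1) Ein x = (-1:ℝ)^m * m.factorial * EF (m+1) x := by
  intro m
  induction m with
  | zero =>
    intro x hx
    rw [iteratedDeriv_one, (hasDerivAt_Ein x).deriv]
    simp [einF, EF, EP, hx.ne', Finset.sum_range_one]
  | succ m ih =>
    intro x hx
    rw [iteratedDeriv_succ]
    have hev : iteratedDeriv (m+1) Ein =ᶠ[nhds x]
        fun y => (-1:ℝ)^m * m.factorial * EF (m+1) y := by
      filter_upwards [isOpen_Ioi.mem_nhds hx] with y hy
      exact ih y hy
    rw [hev.deriv_eq, ((hasDerivAt_EF m x hx.ne').const_mul ((-1:ℝ)^m * m.factorial)).deriv]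
    push_cast [Nat.factorial_succ, pow_succ]
    ring

lemma summable_aux (x : ℝ) (hx : 0 ≤ x) (k : ℕ) :
    Summable (fun n : ℕ => x ^ n / (n+k).factorial) := by
  refine Summable.of_nonneg_of_le (fun n => by positivity) (fun n => ?_)
    (Real.summable_pow_div_factorial x)
  apply div_le_div_of_nonneg_left (by positivity) (by positivity)
  exact_mod_cast Nat.factorial_le (Nat.le_add_right n k)

lemma tsum_shift_eq (k : ℕ) (x : ℝ) (hx : 0 < x) :
    x ^ k * ∑' n : ℕ, x ^ n / (n+k).factorial = Real.exp x - EP k x := by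
  have hs : Summable (fun n : ℕ => x ^ n / n.factorial) := Real.summable_pow_div_factorial x
  have h1 : EP k x + ∑' n : ℕ, x ^ (n+k) / (n+k).factorial
      = ∑' n : ℕ, x ^ n / n.factorial := Summable.sum_add_tsum_nat_add k hs
  have h2 : Real.exp x = ∑' n : ℕ, x ^ n / n.factorial := by
    rw [Real.exp_eq_exp_ℝ, NormedSpace.exp_eq_tsum_div]
  have h3 : x ^ k * ∑' n : ℕ, x ^ n / (n+k).factorial
      = ∑' n : ℕ, x ^ (n+k) / (n+k).factorial := by
    rw [← tsum_mul_left]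
    congr 1; funext n; rw [pow_add]; ring
  rw [h3, h2, ← h1]; ring

lemma EF_eq_tsum (k : ℕ) (x : ℝ) (hx : 0 < x) :
    EF k x = Real.exp (-x) * ∑' n : ℕ, x ^ n / (n+k).factorial := by
  rw [EF, div_eq_iff (pow_ne_zero k hx.ne')]
  have : Real.exp (-x) * (∑' n : ℕ, x ^ n / (n+k).factorial) * x ^ k
      = Real.exp (-x) * (x ^ k * ∑' n : ℕ, x ^ n / (n+k).factorial) := by ring
  rw [this, tsum_shift_eq k x hx, mul_sub, ← Real.exp_add]
  simp

lemma EF_nonneg (k : ℕ) (x : ℝ) (hx : 0 < x) : 0 ≤ EF k x := by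
  rw [EF_eq_tsum k x hx]
  exact mul_nonneg (Real.exp_nonneg _) (tsum_nonneg fun n => by positivity)

lemma EF_le (k : ℕ) (x : ℝ) (hx : 0 < x) : EF k x ≤ 1 / k.factorial := by
  rw [EF_eq_tsum k x hx]
  have hS : (∑' n : ℕ, x ^ n / (n+k).factorial) ≤ Real.exp x / k.factorial := by
    have h2 : Real.exp x / k.factorial = ∑' n : ℕ, x ^ n / n.factorial / k.factorial := by
      rw [Real.exp_eq_exp_ℝ, NormedSpace.exp_eq_tsum_div, tsum_div_const]
    rw [h2]
    refine Summable.tsum_le_tsum (fun n => ?_) (summable_aux x hx.le k)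
      ((Real.summable_pow_div_factorial x).div_const _)
    rw [div_div]
    apply div_le_div_of_nonneg_left (by positivity) (by positivity)
    push_cast
    exact_mod_cast Nat.le_of_dvd (n+k).factorial_pos
      (Nat.factorial_mul_factorial_dvd_factorial_add n k)
  calc Real.exp (-x) * ∑' n : ℕ, x ^ n / (n+k).factorial
      ≤ Real.exp (-x) * (Real.exp x / k.factorial) :=
        mul_le_mul_of_nonneg_left hS (Real.exp_nonneg _)
    _ = 1 / k.factorial := by rw [← mul_div_assoc, ← Real.exp_add]; simp

lemma EF_mono (k : ℕ) (x : ℝ) (hx : 0 < x) : EF (k+1) x ≤ EF k x := by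
  rw [EF_eq_tsum _ x hx, EF_eq_tsum _ x hx]
  refine mul_le_mul_of_nonneg_left ?_ (Real.exp_nonneg _)
  refine Summable.tsum_le_tsum (fun n => ?_) (summable_aux x hx.le (k+1)) (summable_aux x hx.le k)
  apply div_le_div_of_nonneg_left (by positivity) (by positivity)
  exact_mod_cast Nat.factorial_le (by omega)

/-- For every integer `k ≥ 1` and real `x > 0`, one has
`(−1)^{k−1} Ein^{(k)}(x)/k! = (1/k) e^{−x} ∑_{n=0}^∞ x^n/(n+k)!`, hence
`0 ≤ (−1)^{k−1} Ein^{(k)}(x)/k! ≤ 1/(k⋅k!)`, and the sequence `Ein^{(k)}(x)/k!` is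
decreasing in absolute value. -/
theorem Ein_iteratedDeriv_alternating (k : ℕ) (hk : 1 ≤ k) (x : ℝ) (hx : 0 < x) :
    ((-1 : ℝ) ^ (k - 1) * iteratedDeriv k Ein x / (Nat.factorial k) =
      (1 / (k : ℝ)) * Real.exp (-x) * ∑' n : ℕ, x ^ n / (Nat.factorial (n + k))) ∧
    (0 ≤ (-1 : ℝ) ^ (k - 1) * iteratedDeriv k Ein x / (Nat.factorial k)) ∧
    ((-1 : ℝ) ^ (k - 1) * iteratedDeriv k Ein x / (Nat.factorial k) ≤
      1 / ((k : ℝ) * (Nat.factorial k))) ∧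
    (|iteratedDeriv (k + 1) Ein x| / (Nat.factorial (k + 1)) ≤
      |iteratedDeriv k Ein x| / (Nat.factorial k)) := by
  obtain ⟨m, rfl⟩ : ∃ m, k = m + 1 := ⟨k - 1, (Nat.succ_pred_eq_of_pos hk).symm⟩
  have h11 : ((-1:ℝ)^m) * ((-1:ℝ)^m) = 1 := by rw [← mul_pow]; norm_num
  have hm1 : ((m:ℝ) + 1) ≠ 0 := by positivity
  have hfac : ((m+1).factorial : ℝ) ≠ 0 := Nat.cast_ne_zero.2 (m+1).factorial_ne_zero
  have key : (-1 : ℝ) ^ (m + 1 - 1) * iteratedDeriv (m+1) Ein x / ((m+1).factorial)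
      = EF (m+1) x / (m+1) := by
    rw [Nat.add_sub_cancel, Ein_iteratedDeriv_eq m x hx, Nat.factorial_succ]
    push_cast
    field_simp
    ring_nf
    have h2 : ((-1:ℝ)) ^ (m * 2) = 1 := by
      rw [mul_comm, pow_mul]; norm_num
    rw [h2]
    ring
  have hEF : EF (m+1) x = Real.exp (-x) * ∑' n : ℕ, x ^ n / (n+(m+1)).factorial :=
    EF_eq_tsum (m+1) x hx
  refine ⟨?_, ?_, ?_, ?_⟩
  · rw [key, hEF]
    push_cast
    ring
  · rw [key]
    exact div_nonneg (EF_nonneg _ x hx) (by positivity)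
  · rw [key]
    push_cast
    rw [div_le_div_iff₀ (by positivity) (by positivity)]
    calc EF (m+1) x * (((m:ℝ)+1) * (m+1).factorial)
        ≤ (1 / (m+1).factorial) * (((m:ℝ)+1) * (m+1).factorial) := by
          exact mul_le_mul_of_nonneg_right (EF_le _ x hx) (by positivity)
      _ = 1 * ((m:ℝ)+1) := by field_simp
  · rw [Ein_iteratedDeriv_eq m x hx, Ein_iteratedDeriv_eq (m+1) x hx]
    have habs : ∀ p : ℕ, ∀ c : ℝ, 0 ≤ c → |(-1:ℝ)^p * (p.factorial : ℝ) * c|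
        = (p.factorial : ℝ) * c := by
      intro p c hc
      rw [abs_mul, abs_mul, abs_pow, abs_neg, abs_one, one_pow, one_mul,
        Nat.abs_cast, abs_of_nonneg hc]
    rw [habs m _ (EF_nonneg _ x hx), habs (m+1) _ (EF_nonneg _ x hx)]
    have h1 : ((m+1).factorial : ℝ) * EF (m+2) x / ((m+1+1).factorial)
        = EF (m+2) x / ((m:ℝ)+2) := by
      rw [Nat.factorial_succ (m+1)]
      push_cast
      field_simp
      ring
    have h2 : ((m).factorial : ℝ) * EF (m+1) x / ((m+1).factorial)
        = EF (m+1) x / ((m:ℝ)+1) := by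
      rw [Nat.factorial_succ m]
      have : ((m).factorial : ℝ) ≠ 0 := Nat.cast_ne_zero.2 m.factorial_ne_zero
      push_cast
      field_simp
    rw [h1, h2]
    exact div_le_div₀ (EF_nonneg _ x hx) (EF_mono (m+1) x hx) (by positivity) (by linarith)
end

section
/- Let κ ≥ 1 be an integer. Define real numbers a_0, …, a_{2κ−1} by a_{2κ−1} = 1 and, for 0 ≤ r < 2κ−1, a_r = −(κ/(2κ−1−r)) ∑_{n=r+1}^{2κ−1} binom(n, r) a_n, and set q(u) = ∑_{n=0}^{2κ−1} a_n u^n. Then q satisfies the differential-delay equation (d/du)(u·q(u)) = κ(q(u) + q(u+1)) for all real u, and lim_{u→∞} u^{1−2κ} q(u) = 1. -/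
/-- Let `κ ≥ 1` be an integer and let `a_{2κ−1} = 1`,
`a_r = −(κ/(2κ−1−r)) ∑_{n=r+1}^{2κ−1} C(n,r) a_n` for `r < 2κ−1`, and
`q(u) = ∑_{n=0}^{2κ−1} a_n u^n`.  Then `(u q(u))′ = κ (q(u) + q(u+1))` for all real `u`
and `u^{1−2κ} q(u) → 1` as `u → ∞`. -/
theorem q_polynomial_solution (κ : ℕ) (hκ : 1 ≤ κ) (a : ℕ → ℝ)
    (ha_top : a (2 * κ - 1) = 1)
    (ha_rec : ∀ r : ℕ, r < 2 * κ - 1 →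
      a r = -((κ : ℝ) / (2 * (κ : ℝ) - 1 - (r : ℝ))) *
        ∑ n ∈ Finset.Icc (r + 1) (2 * κ - 1), (n.choose r : ℝ) * a n)
    (q : ℝ → ℝ) (hq : q = fun u : ℝ => ∑ n ∈ Finset.range (2 * κ), a n * u ^ n) :
    (∀ u : ℝ, HasDerivAt (fun t : ℝ => t * q t) ((κ : ℝ) * (q u + q (u + 1))) u) ∧
    Filter.Tendsto (fun u : ℝ => u ^ (1 - 2 * (κ : ℤ)) * q u) Filter.atTop (nhds 1) := by
  set M := 2 * κ - 1 with hM
  have hMN : M + 1 = 2 * κ := by omega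
  have hMc : (M : ℝ) = 2 * (κ : ℝ) - 1 := by
    have : ((M : ℝ)) + 1 = 2 * κ := by exact_mod_cast congrArg (Nat.cast : ℕ → ℝ) hMN
    linarith
  -- coefficient identity
  have hcoef : ∀ r, r ≤ M → ((r : ℝ) + 1) * a r
      = (κ : ℝ) * (2 * a r + ∑ n ∈ Finset.Icc (r + 1) M, (n.choose r : ℝ) * a n) := by
    intro r hr
    rcases eq_or_lt_of_le hr with h | h
    · subst h
      rw [Finset.Icc_eq_empty (by omega)]
      simp only [Finset.sum_empty, add_zero]
      rw [hMc]; ring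
    · have hrc : (r : ℝ) < (M : ℝ) := by exact_mod_cast h
      have hne : 2 * (κ : ℝ) - 1 - (r : ℝ) ≠ 0 := by rw [← hMc]; intro h0; linarith
      have hrec := ha_rec r h
      have key : (2 * (κ : ℝ) - 1 - (r : ℝ)) * a r
          = -((κ : ℝ) * ∑ n ∈ Finset.Icc (r + 1) M, (n.choose r : ℝ) * a n) := by
        rw [hrec]; field_simp
      rw [hMc] at hrc
      linear_combination -key
  -- the main sum identity
  have key : ∀ u : ℝ, (κ : ℝ) * (q u + q (u + 1))
      = ∑ n ∈ Finset.range (M + 1), (((n : ℝ) + 1) * a n) * u ^ n := by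
    intro u
    have e1 : q (u + 1) = ∑ k ∈ Finset.range (M + 1),
        (∑ n ∈ Finset.Icc k M, (n.choose k : ℝ) * a n) * u ^ k := by
      rw [hq, ← hMN]
      simp only
      have swap : ∑ n ∈ Finset.range (M + 1), ∑ k ∈ Finset.range (n + 1),
            (n.choose k : ℝ) * a n * u ^ k
          = ∑ k ∈ Finset.range (M + 1), ∑ n ∈ Finset.Icc k M,
            (n.choose k : ℝ) * a n * u ^ k := by
        simp only [← Nat.Ico_zero_eq_range, ← Finset.Ico_add_one_right_eq_Icc]
        exact (Finset.sum_Ico_Ico_comm 0 (M + 1)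
          (fun k n => (n.choose k : ℝ) * a n * u ^ k)).symm
      calc ∑ n ∈ Finset.range (M + 1), a n * (u + 1) ^ n
          = ∑ n ∈ Finset.range (M + 1), ∑ k ∈ Finset.range (n + 1),
              (n.choose k : ℝ) * a n * u ^ k := by
            refine Finset.sum_congr rfl fun n _ => ?_
            rw [add_pow, Finset.mul_sum]
            refine Finset.sum_congr rfl fun k _ => ?_
            simp only [one_pow]
            ring
        _ = ∑ k ∈ Finset.range (M + 1), ∑ n ∈ Finset.Icc k M,
              (n.choose k : ℝ) * a n * u ^ k := swap
        _ = _ := by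
            refine Finset.sum_congr rfl fun k _ => ?_
            rw [Finset.sum_mul]
    rw [e1, hq, ← hMN]
    simp only
    rw [← Finset.sum_add_distrib, Finset.mul_sum]
    refine Finset.sum_congr rfl fun k hk => ?_
    have hkM : k ≤ M := by
      have := Finset.mem_range.mp hk; omega
    have hsplit : Finset.Icc k M = insert k (Finset.Icc (k + 1) M) := by
      ext x; simp only [Finset.mem_Icc, Finset.mem_insert]; omega
    rw [hsplit, Finset.sum_insert (by simp)]
    simp only [Nat.choose_self, Nat.cast_one, one_mul]
    have h := hcoef k hkM
    linear_combination (-(u ^ k)) * h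
  constructor
  · intro u
    rw [show (κ : ℝ) * (q u + q (u + 1))
        = ∑ n ∈ Finset.range (M + 1), (((n : ℝ) + 1) * a n) * u ^ n from key u]
    have hfun : (fun t : ℝ => t * q t) = fun t => ∑ n ∈ Finset.range (M + 1), a n * t ^ (n + 1) := by
      funext t
      rw [hq, ← hMN]
      simp only
      rw [Finset.mul_sum]
      exact Finset.sum_congr rfl fun n _ => by ring
    rw [hfun]
    refine HasDerivAt.fun_sum fun n _ => ?_
    have h := (hasDerivAt_pow (n + 1) u).const_mul (a n)
    convert h using 1
    · rfl
    simp only [Nat.add_sub_cancel]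
    push_cast
    ring
  · have heq : ∀ᶠ u in Filter.atTop, (fun u : ℝ => u ^ (1 - 2 * (κ : ℤ)) * q u) u
        = ∑ n ∈ Finset.range (M + 1), a n * u ^ ((n : ℤ) - (M : ℤ)) := by
      filter_upwards [Filter.eventually_gt_atTop (0 : ℝ)] with u hu
      have hu0 : u ≠ 0 := ne_of_gt hu
      rw [hq, ← hMN]
      simp only
      rw [Finset.mul_sum]
      refine Finset.sum_congr rfl fun n hn => ?_
      have hz : (1 : ℤ) - 2 * (κ : ℤ) + (n : ℤ) = (n : ℤ) - (M : ℤ) := by omega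
      rw [← zpow_natCast u n, ← hz, zpow_add₀ hu0]
      ring
    have h2 : Filter.Tendsto (fun u : ℝ => ∑ n ∈ Finset.range (M + 1), a n * u ^ ((n : ℤ) - (M : ℤ)))
        Filter.atTop (nhds (∑ n ∈ Finset.range (M + 1), if n = M then (1 : ℝ) else 0)) := by
      refine tendsto_finset_sum _ fun n hn => ?_
      rcases eq_or_ne n M with h | h
      · subst h
        simp only [if_pos rfl, sub_self, zpow_zero, mul_one]
        simpa [ha_top] using (tendsto_const_nhds : Filter.Tendsto (fun _ : ℝ => a n) Filter.atTop (nhds (a n)))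
      · have hnM : n < M := by
          have := Finset.mem_range.mp hn; omega
        have hneg : (n : ℤ) - (M : ℤ) < 0 := by omega
        simp only [if_neg h]
        simpa using (tendsto_zpow_atTop_zero hneg).const_mul (a n)
    have hsum1 : (∑ n ∈ Finset.range (M + 1), if n = M then (1 : ℝ) else 0) = 1 := by
      rw [Finset.sum_ite_eq' (Finset.range (M + 1)) M (fun _ => (1 : ℝ))]
      simp
    rw [hsum1] at h2
    exact h2.congr' (Filter.EventuallyEq.symm heq)
end

section
/- Let κ ≥ 1 be an integer, let γ denote the Euler–Mascheroni constant, set A = κ!·(2e^γ)^κ, and let σ : ℝ_{>0} → ℝ be the continuous function with σ(u) = A^{−1} u^κ for u ∈ (0, 2] and such that u ↦ u^{−κ}σ(u) is differentiable on (2, ∞) with (d/du)(u^{−κ}σ(u)) = −κ u^{−κ−1} σ(u−2) for u > 2. Then for every u ∈ [0, 1], A·σ(3 − u) = (3 − u)^κ (1 − κ·log((3 − u)/2)) + κ ∑_{n=1}^{κ} (1 − u)^n (3 − u)^{κ−n}/n. -/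
/-- Let `κ ≥ 1` be an integer, `A = κ! (2e^γ)^κ`, and let `σ` be the continuous solution
of the DHR differential-delay system with `σ(u) = A⁻¹ u^κ` on `(0,2]`.  Then for
`u ∈ [0,1]`,
`A σ(3−u) = (3−u)^κ (1 − κ log((3−u)/2)) + κ ∑_{n=1}^{κ} (1−u)^n (3−u)^{κ−n}/n`. -/
theorem sigma_on_two_three (κ : ℕ) (hκ : 1 ≤ κ) (A : ℝ)
    (hA : A = (Nat.factorial κ : ℝ) * (2 * Real.exp Real.eulerMascheroniConstant) ^ κ)
    (σ : ℝ → ℝ) (hσc : ContinuousOn σ (Set.Ioi 0))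
    (hσ0 : ∀ u ∈ Set.Ioc (0 : ℝ) 2, σ u = A⁻¹ * u ^ κ)
    (hσd : ∀ u : ℝ, 2 < u →
      HasDerivAt (fun t : ℝ => t ^ (-(κ : ℝ)) * σ t)
        (-(κ : ℝ) * u ^ (-(κ : ℝ) - 1) * σ (u - 2)) u)
    (u : ℝ) (hu : u ∈ Set.Icc (0 : ℝ) 1) :
    A * σ (3 - u) = (3 - u) ^ κ * (1 - (κ : ℝ) * Real.log ((3 - u) / 2)) +
      (κ : ℝ) * ∑ n ∈ Finset.Icc 1 κ, (1 - u) ^ n * (3 - u) ^ (κ - n) / (n : ℝ) := by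
  have hA0 : 0 < A := by rw [hA]; positivity
  set v : ℝ := 3 - u with hvdef
  have h1u : (1 : ℝ) - u = v - 2 := by rw [hvdef]; ring
  rw [h1u]
  have hv2 : 2 ≤ v := by rw [hvdef]; linarith [hu.2]
  have hv3 : v ≤ 3 := by rw [hvdef]; linarith [hu.1]
  have key : ∀ w : ℝ, 2 ≤ w → w ≤ 3 →
      A * σ w = w ^ κ * (1 - (κ : ℝ) * Real.log (w / 2)) +
        (κ : ℝ) * ∑ n ∈ Finset.Icc 1 κ, (w - 2) ^ n * w ^ (κ - n) / (n : ℝ) := by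
    intro w hw2 hw3
    rcases eq_or_lt_of_le hw2 with hw2' | hw2'
    · -- w = 2 case
      have hsum0 : ∑ n ∈ Finset.Icc 1 κ, ((2 : ℝ) - 2) ^ n * (2 : ℝ) ^ (κ - n) / (n : ℝ)
          = 0 := by
        apply Finset.sum_eq_zero
        intro n hn
        have hn1 : 1 ≤ n := (Finset.mem_Icc.mp hn).1
        simp [zero_pow (by omega : n ≠ 0)]
      rw [← hw2', hσ0 2 ⟨by norm_num, le_refl 2⟩, hsum0]
      rw [mul_inv_cancel_left₀ (ne_of_gt hA0)]
      norm_num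
    · -- 2 < w ≤ 3
      set G : ℝ → ℝ := fun t => A⁻¹ *
        ((1 - (κ : ℝ) * Real.log (t / 2)) +
          (κ : ℝ) * ∑ n ∈ Finset.Icc 1 κ, ((t - 2) / t) ^ n / (n : ℝ)) with hGdef
      -- derivative of G on (2, 3)
      have hGd : ∀ t : ℝ, 2 < t → t < 3 →
          HasDerivAt G (-(κ : ℝ) * t ^ (-(κ : ℝ) - 1) * σ (t - 2)) t := by
        intro t ht2 ht3
        have ht0 : (0 : ℝ) < t := by linarith
        have ht0' : t ≠ 0 := ne_of_gt ht0
        have hσt : σ (t - 2) = A⁻¹ * (t - 2) ^ κ :=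
          hσ0 (t - 2) ⟨by linarith, by linarith⟩
        have hlog : HasDerivAt (fun s : ℝ => Real.log (s / 2)) (1 / t) t := by
          have := ((hasDerivAt_id t).div_const 2).log (by positivity)
          convert this using 1
          simp only [id_eq]
          field_simp
          exact (div_self ht0').symm
        have hterm : ∀ n ∈ Finset.Icc 1 κ,
            HasDerivAt (fun s : ℝ => ((s - 2) / s) ^ n / (n : ℝ))
              (((t - 2) / t) ^ (n - 1) * (2 / t ^ 2)) t := by
          intro n hn
          have hn1 : 1 ≤ n := (Finset.mem_Icc.mp hn).1
          have hx : HasDerivAt (fun s : ℝ => (s - 2) / s) (2 / t ^ 2) t := by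
            have := ((hasDerivAt_id t).sub_const 2).div (hasDerivAt_id t) ht0'
            refine this.congr_deriv ?_
            simp only [id_eq]
            ring
          have := (hx.pow n).div_const (n : ℝ)
          have hn0 : (n : ℝ) ≠ 0 := Nat.cast_ne_zero.mpr (by omega)
          refine this.congr_deriv ?_
          rw [mul_assoc, mul_div_cancel_left₀ _ hn0]
        have hsumd : HasDerivAt
            (fun s : ℝ => ∑ n ∈ Finset.Icc 1 κ, ((s - 2) / s) ^ n / (n : ℝ))
            (∑ n ∈ Finset.Icc 1 κ, ((t - 2) / t) ^ (n - 1) * (2 / t ^ 2)) t :=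
          HasDerivAt.fun_sum hterm
        have hgeom : ∑ n ∈ Finset.Icc 1 κ, ((t - 2) / t) ^ (n - 1) * (2 / t ^ 2)
            = (1 - ((t - 2) / t) ^ κ) / t := by
          rw [← Finset.sum_mul]
          have h1 : ∑ n ∈ Finset.Icc 1 κ, ((t - 2) / t) ^ (n - 1)
              = ∑ i ∈ Finset.range κ, ((t - 2) / t) ^ i := by
            rw [← Finset.Ico_add_one_right_eq_Icc, Finset.sum_Ico_eq_sum_range]
            simp
          have hx1 : (t - 2) / t ≠ 1 := by
            rw [Ne, div_eq_one_iff_eq ht0']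
            intro h
            linarith
          rw [h1, geom_sum_eq hx1]
          have ht2' : (t - 2) / t - 1 = -2 / t := by field_simp; ring
          rw [ht2']
          field_simp
          try ring
        rw [hgeom] at hsumd
        have hG' : HasDerivAt G
            (A⁻¹ * ((0 - (κ : ℝ) * (1 / t)) +
              (κ : ℝ) * ((1 - ((t - 2) / t) ^ κ) / t))) t := by
          exact (((hasDerivAt_const t (1 : ℝ)).sub (hlog.const_mul (κ : ℝ))).add
            (hsumd.const_mul (κ : ℝ))).const_mul A⁻¹
        convert hG' using 1
        rw [hσt]
        have hrpow : t ^ (-(κ : ℝ) - 1) = (t ^ (κ + 1))⁻¹ := by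
          rw [show -(κ : ℝ) - 1 = -((κ + 1 : ℕ) : ℝ) by push_cast; ring,
            Real.rpow_neg ht0.le, Real.rpow_natCast]
        rw [hrpow, div_pow]
        field_simp
        ring
      -- the function t^(-κ) σ t - G t has zero derivative on (2, w)
      set D : ℝ → ℝ := fun t => t ^ (-(κ : ℝ)) * σ t - G t with hDdef
      have hDd : ∀ t ∈ Set.Ioo (2 : ℝ) w, HasDerivAt D 0 t := by
        intro t ht
        have h1 := hσd t ht.1
        have h2 := hGd t ht.1 (lt_of_lt_of_le ht.2 hw3)
        have := h1.sub h2
        rw [sub_self] at this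
        exact this
      -- continuity of D on [2, w]
      have hDc : ContinuousOn D (Set.Icc 2 w) := by
        have hsub : Set.Icc (2 : ℝ) w ⊆ Set.Ioi 0 := by
          intro t ht
          exact lt_of_lt_of_le (by norm_num) ht.1
        have hne : ∀ t ∈ Set.Icc (2 : ℝ) w, t ≠ 0 := fun t ht => ne_of_gt (hsub ht)
        apply ContinuousOn.sub
        · exact (continuousOn_id.rpow_const (fun t ht => Or.inl (hne t ht))).mul
            (hσc.mono hsub)
        · apply ContinuousOn.mul continuousOn_const
          apply ContinuousOn.add
          · exact continuousOn_const.sub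
              (continuousOn_const.mul ((continuousOn_id.div_const 2).log
                (fun t ht => div_ne_zero (hne t ht) two_ne_zero)))
          · apply ContinuousOn.mul continuousOn_const
            apply continuousOn_finset_sum
            intro n hn
            exact (((continuousOn_id.sub continuousOn_const).div
              continuousOn_id (fun t ht => hne t ht)).pow n).div_const (n : ℝ)
      -- mean value theorem gives D w = D 2
      obtain ⟨c, _, hc⟩ := exists_hasDerivAt_eq_slope D (fun _ => 0) hw2' hDc hDd
      have hDw : D w = D 2 := by
        have hw2ne : w - 2 ≠ 0 := sub_ne_zero.mpr (ne_of_gt hw2')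
        have h := hc.symm
        rw [div_eq_zero_iff] at h
        rcases h with h | h
        · linarith [sub_eq_zero.mp h]
        · exact absurd h hw2ne
      -- compute D 2 = 0
      have hD2 : D 2 = 0 := by
        have hσ2 : σ 2 = A⁻¹ * 2 ^ κ := hσ0 2 ⟨by norm_num, le_refl 2⟩
        have h2pow : (2 : ℝ) ^ (-(κ : ℝ)) = ((2 : ℝ) ^ κ)⁻¹ := by
          rw [← Real.rpow_natCast 2 κ, ← Real.rpow_neg (by norm_num)]
        have hsum2 : ∑ n ∈ Finset.Icc 1 κ, (((2 : ℝ) - 2) / 2) ^ n / (n : ℝ) = 0 := by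
          apply Finset.sum_eq_zero
          intro n hn
          have hn1 : 1 ≤ n := (Finset.mem_Icc.mp hn).1
          norm_num [zero_pow (by omega : n ≠ 0)]
        simp only [hDdef, hGdef, hσ2, h2pow]
        rw [hsum2]
        have hlog1 : Real.log ((2 : ℝ) / 2) = 0 := by norm_num
        rw [hlog1]
        field_simp
        ring
      rw [hD2] at hDw
      -- unfold D w = 0 into the final identity
      have hw0 : (0 : ℝ) < w := by linarith
      have hwpow : w ^ (-(κ : ℝ)) = ((w : ℝ) ^ κ)⁻¹ := by
        rw [← Real.rpow_natCast w κ, ← Real.rpow_neg hw0.le]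
      have hDw' : (w ^ κ)⁻¹ * σ w = G w := by
        have h := sub_eq_zero.mp hDw
        rw [hwpow] at h
        exact h
      have hσw : σ w = w ^ κ * G w := by
        rw [← hDw', mul_inv_cancel_left₀ (by positivity : (w : ℝ) ^ κ ≠ 0)]
      rw [hσw, hGdef]
      have hterm2 : ∀ n ∈ Finset.Icc 1 κ,
          (w : ℝ) ^ κ * (((w - 2) / w) ^ n / (n : ℝ))
            = (w - 2) ^ n * w ^ (κ - n) / (n : ℝ) := by
        intro n hn
        obtain ⟨hn1, hnκ⟩ := Finset.mem_Icc.mp hn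
        have hpow : (w : ℝ) ^ κ = w ^ (κ - n) * w ^ n := (pow_sub_mul_pow w hnκ).symm
        rw [hpow, div_pow]
        have hwne : (w : ℝ) ≠ 0 := ne_of_gt hw0
        field_simp
      have hS : (w : ℝ) ^ κ * (∑ n ∈ Finset.Icc 1 κ, ((w - 2) / w) ^ n / (n : ℝ))
          = ∑ n ∈ Finset.Icc 1 κ, (w - 2) ^ n * w ^ (κ - n) / (n : ℝ) := by
        rw [Finset.mul_sum]
        exact Finset.sum_congr rfl hterm2
      rw [← hS]
      field_simp
  exact key v hv2 hv3
end
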